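/- Let K ≥ 2, M, N, L ≥ 1 be integers with L ≥ KM - N and L ≥ N and KM > N. Define Δ_dep(p) = min(p(KM-N), (1-p)N) and Δ_ind(p) = min(pKM, N) - Σ_{i=0}^{K} B_K(i) min(iM, N), where B_K(i) = C(K,i) p^i (1-p)^{K-i}. Then Δ_dep(p) > Δ_ind(p) for all p ∈ (0,1). -/

import Mathlib

noncomputable def binPMF (K : ℕ) (i : ℤ) (p : ℝ) : ℝ :=
  if 0 ≤ i then (K.choose i.toNat : ℝ) * p ^ i.toNat * (1 - p) ^ (K - i.toNat) else 0

lemma bin_mean (K : ℕ) (hK : 1 ≤ K) (p : ℝ) :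
    ∑ i ∈ Finset.range (K+1), (K.choose i : ℝ) * p^i * (1-p)^(K-i) * i = K * p := by
  rw [Finset.sum_range_succ']
  simp only [Nat.cast_zero, mul_zero, zero_add, add_zero]
  have hsum : ∑ i ∈ Finset.range K, ((K-1).choose i : ℝ) * p^i * (1-p)^(K-1-i) = 1 := by
    have h := add_pow p (1-p) (K-1)
    have h1 : p + (1-p) = 1 := by ring
    rw [h1, one_pow, Nat.sub_add_cancel hK] at h
    conv_rhs => rw [h]
    exact Finset.sum_congr rfl (fun i _ => by ring)
  have hterm : ∀ i, (K.choose (i+1) : ℝ) * p^(i+1) * (1-p)^(K-(i+1)) * ((i:ℝ)+1)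
      = (K:ℝ) * p * (((K-1).choose i : ℝ) * p^i * (1-p)^(K-1-i)) := by
    intro i
    have hnat : K * (K-1).choose i = K.choose (i+1) * (i+1) := by
      have := Nat.add_one_mul_choose_eq (K-1) i
      rwa [Nat.sub_add_cancel hK] at this
    have hcast : (K:ℝ) * ((K-1).choose i : ℝ) = (K.choose (i+1) : ℝ) * ((i:ℝ)+1) := by
      have := congrArg (Nat.cast : ℕ → ℝ) hnat
      push_cast at this
      linarith
    have hsub : K - (i+1) = K - 1 - i := by omega
    rw [hsub, pow_succ]
    linear_combination (-(p^i * p * (1-p)^(K-1-i))) * hcast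
  calc ∑ i ∈ Finset.range K, (K.choose (i+1) : ℝ) * p^(i+1) * (1-p)^(K-(i+1)) * ((i+1 : ℕ) : ℝ)
      = ∑ i ∈ Finset.range K, (K:ℝ) * p * (((K-1).choose i : ℝ) * p^i * (1-p)^(K-1-i)) := by
        refine Finset.sum_congr rfl (fun i _ => ?_)
        push_cast
        exact hterm i
    _ = (K:ℝ) * p * ∑ i ∈ Finset.range K, ((K-1).choose i : ℝ) * p^i * (1-p)^(K-1-i) := by
        rw [Finset.mul_sum]
    _ = K * p := by rw [hsum, mul_one]

theorem dep_gain_gt_ind_gain (K M N L : ℕ) (hK : 2 ≤ K) (hM : 1 ≤ M) (hN : 1 ≤ N)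
    (hL : 1 ≤ L) (hL1 : K * M ≤ N + L) (hL2 : N ≤ L) (h : N < K * M)
    (p : ℝ) (hp : p ∈ Set.Ioo (0:ℝ) 1) :
    min (p * (K : ℝ) * M) (N : ℝ)
        - ∑ i ∈ Finset.range (K+1), binPMF K (i : ℤ) p * min ((i : ℝ) * M) (N : ℝ)
      < min (p * ((K : ℝ) * M - N)) ((1 - p) * N) := by
  obtain ⟨hp0, hp1⟩ := hp
  have hq0 : (0:ℝ) < 1 - p := by linarith
  have hKpos : (0:ℝ) < (K:ℝ) := by positivity
  have hNpos : (0:ℝ) < (N:ℝ) := by exact_mod_cast hN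
  have hMpos : (0:ℝ) < (M:ℝ) := by exact_mod_cast hM
  have hKM : (N:ℝ) < (K:ℝ) * M := by exact_mod_cast h
  -- simplify binPMF
  have hbin : ∀ i : ℕ, binPMF K (i : ℤ) p = (K.choose i : ℝ) * p^i * (1-p)^(K-i) := by
    intro i
    simp [binPMF]
  -- the key inequality: S > p * N
  have hS : p * N < ∑ i ∈ Finset.range (K+1),
      binPMF K (i : ℤ) p * min ((i : ℝ) * M) (N : ℝ) := by
    have hlow : ∑ i ∈ Finset.range (K+1),
        (K.choose i : ℝ) * p^i * (1-p)^(K-i) * ((i:ℝ) * (N / K))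
        < ∑ i ∈ Finset.range (K+1), binPMF K (i : ℤ) p * min ((i : ℝ) * M) (N : ℝ) := by
      apply Finset.sum_lt_sum
      · intro i hi
        rw [hbin i]
        apply mul_le_mul_of_nonneg_left _ (by positivity)
        apply le_min
        · -- i * (N/K) ≤ i * M
          apply mul_le_mul_of_nonneg_left _ (by positivity)
          rw [div_le_iff₀ hKpos]
          nlinarith
        · -- i * (N/K) ≤ N
          have hiK : (i:ℝ) ≤ K := by
            have : i ≤ K := by simpa using Nat.lt_succ_iff.mp (Finset.mem_range.mp hi)
            exact_mod_cast this
          rw [div_eq_mul_inv]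
          calc (i:ℝ) * ((N:ℝ) * (K:ℝ)⁻¹) ≤ (K:ℝ) * ((N:ℝ) * (K:ℝ)⁻¹) := by
                apply mul_le_mul_of_nonneg_right hiK (by positivity)
            _ = N := by field_simp
      · refine ⟨1, Finset.mem_range.mpr (by omega), ?_⟩
        rw [hbin 1, Nat.choose_one_right]
        apply mul_lt_mul_of_pos_left _
          (mul_pos (mul_pos hKpos (pow_pos hp0 1)) (pow_pos hq0 _))
        simp only [Nat.cast_one, one_mul]
        apply lt_min
        · rw [div_lt_iff₀ hKpos]; nlinarith
        · rw [div_lt_iff₀ hKpos]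
          have : (2:ℝ) ≤ (K:ℝ) := by exact_mod_cast hK
          nlinarith
    have heq : ∑ i ∈ Finset.range (K+1),
        (K.choose i : ℝ) * p^i * (1-p)^(K-i) * ((i:ℝ) * (N / K)) = p * N := by
      have : ∑ i ∈ Finset.range (K+1),
          (K.choose i : ℝ) * p^i * (1-p)^(K-i) * ((i:ℝ) * (N / K))
          = (N / K) * ∑ i ∈ Finset.range (K+1), (K.choose i : ℝ) * p^i * (1-p)^(K-i) * i := by
        rw [Finset.mul_sum]
        exact Finset.sum_congr rfl (fun i _ => by ring)
      rw [this, bin_mean K (by omega) p]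
      field_simp
    linarith [heq ▸ hlow]
  apply lt_min
  · have h1 : min (p * (K : ℝ) * M) (N : ℝ) ≤ p * (K:ℝ) * M := min_le_left _ _
    nlinarith
  · have h2 : min (p * (K : ℝ) * M) (N : ℝ) ≤ (N:ℝ) := min_le_right _ _
    nlinarith
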